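/- Let V be a finite-dimensional real vector space and J₊, J₋ two complex structures on V (linear endomorphisms with J ∘ J = −id_V). Then J₊ and J₋ commute (J₊ ∘ J₋ = J₋ ∘ J₊) if and only if dim ker(J₊ − J₋) + dim ker(J₊ + J₋) = dim V. -/
import Mathlib


/-- Two complex structures `J₊, J₋` on a finite-dimensional real vector
space `V` commute if and only if
`dim ker (J₊ - J₋) + dim ker (J₊ + J₋) = dim V`. -/
theorem commute_iff_finrank_kernels_add
    (V : Type*) [AddCommGroup V] [Module ℝ V] [FiniteDimensional ℝ V]
    (Jp Jm : V →ₗ[ℝ] V)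
    (hJp : Jp ∘ₗ Jp = -LinearMap.id) (hJm : Jm ∘ₗ Jm = -LinearMap.id) :
    Jp ∘ₗ Jm = Jm ∘ₗ Jp ↔
      Module.finrank ℝ (LinearMap.ker (Jp - Jm)) +
        Module.finrank ℝ (LinearMap.ker (Jp + Jm)) = Module.finrank ℝ V := by
  have hp : ∀ x, Jp (Jp x) = -x := fun x => by
    simpa using LinearMap.congr_fun hJp x
  have hm : ∀ x, Jm (Jm x) = -x := fun x => by
    simpa using LinearMap.congr_fun hJm x
  -- the kernels always intersect trivially
  have hinf : LinearMap.ker (Jp - Jm) ⊓ LinearMap.ker (Jp + Jm) = ⊥ := by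
    rw [Submodule.eq_bot_iff]
    rintro x ⟨h1, h2⟩
    simp only [SetLike.mem_coe, LinearMap.mem_ker, LinearMap.sub_apply,
      LinearMap.add_apply] at h1 h2
    have h3 : Jm x = Jp x := by rw [sub_eq_zero] at h1; exact h1.symm
    have h4 : (2 : ℝ) • Jp x = 0 := by
      rw [two_smul]; rw [h3] at h2; exact h2
    have h5 : Jp x = 0 := by
      rcases smul_eq_zero.mp h4 with h | h
      · norm_num at h
      · exact h
    have := hp x
    rw [h5, map_zero] at this
    simpa using this.symm
  have key := Submodule.finrank_sup_add_finrank_inf_eq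
    (LinearMap.ker (Jp - Jm)) (LinearMap.ker (Jp + Jm))
  rw [hinf, finrank_bot, add_zero] at key
  constructor
  · intro hc
    have hc' : ∀ x, Jp (Jm x) = Jm (Jp x) := fun x => LinearMap.congr_fun hc x
    have hsup : LinearMap.ker (Jp - Jm) ⊔ LinearMap.ker (Jp + Jm) = ⊤ := by
      rw [Submodule.eq_top_iff']
      intro x
      rw [Submodule.mem_sup]
      refine ⟨(2⁻¹ : ℝ) • (x - Jp (Jm x)), ?_, (2⁻¹ : ℝ) • (x + Jp (Jm x)), ?_, ?_⟩
      · rw [LinearMap.mem_ker]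
        simp only [LinearMap.sub_apply, map_smul, map_sub, map_add]
        rw [hp (Jm x), hc' x, hm (Jp x)]
        module
      · rw [LinearMap.mem_ker]
        simp only [LinearMap.add_apply, map_smul, map_sub, map_add]
        rw [hp (Jm x), hc' x, hm (Jp x)]
        module
      · rw [← smul_add]
        rw [show x - Jp (Jm x) + (x + Jp (Jm x)) = (2 : ℝ) • x by
          rw [two_smul]; abel]
        rw [smul_smul]
        norm_num
    rw [hsup, finrank_top] at key
    exact key.symm
  · intro hdim
    have hsup : LinearMap.ker (Jp - Jm) ⊔ LinearMap.ker (Jp + Jm) = ⊤ := by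
      apply Submodule.eq_top_of_finrank_eq
      rw [key, hdim]
    ext x
    have hx : x ∈ LinearMap.ker (Jp - Jm) ⊔ LinearMap.ker (Jp + Jm) := by
      rw [hsup]; trivial
    rw [Submodule.mem_sup] at hx
    obtain ⟨a, ha, b, hb, rfl⟩ := hx
    rw [LinearMap.mem_ker, LinearMap.sub_apply, sub_eq_zero] at ha
    rw [LinearMap.mem_ker, LinearMap.add_apply, add_eq_zero_iff_eq_neg] at hb
    simp only [LinearMap.comp_apply, map_add]
    have ea : Jp (Jm a) = Jm (Jp a) := by
      rw [← ha, hp a, ha, hm a]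
    have hb' : Jm b = -Jp b := by rw [hb, neg_neg]
    have eb : Jp (Jm b) = Jm (Jp b) := by
      rw [hb', map_neg, hp b, hb, map_neg, hm b]
    rw [ea, eb]
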